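/- arXiv:2102.01725 — 2 statements merged into one kernel-verified Lean document; each statement's English description precedes it below -/
import Mathlib

section
/- In the Bergman space A² = 𝒟_{−1} (weights ω_k = 1/(k+1)), there exists a nonzero function f with f(0) ≠ 0 and an n such that the n-th optimal polynomial approximant of 1/f has a zero strictly inside the open unit disk; in fact the minimal modulus of such a zero over all f and n equals 2√2/3, attained by f(z) = (1 − z/√2)^{−3}. -/
open scoped BigOperators
open Polynomial Filter

noncomputable section

/-- Coefficient sequence of the product p·f, where f is an analytic function on the disk
given by its Taylor coefficient sequence. -/
def polyMulSeq (p : Polynomial ℂ) (f : ℕ → ℂ) : ℕ → ℂ :=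
  fun n => ∑ j ∈ Finset.range (n + 1), p.coeff j * f (n - j)

/-- The constant function 1 as a Taylor coefficient sequence. -/
def oneSeq : ℕ → ℂ := fun n => if n = 0 then 1 else 0

/-- Membership in the weighted Hardy space H²_ω. -/
def MemHw (ω : ℕ → ℝ) (f : ℕ → ℂ) : Prop :=
  Summable (fun k => ‖f k‖ ^ 2 * ω k)

/-- Squared weighted norm ‖f‖²_ω. -/
def wNormSq (ω : ℕ → ℝ) (f : ℕ → ℂ) : ℝ := ∑' k, ‖f k‖ ^ 2 * ω k

/-- Weighted inner product ⟨f,g⟩_ω. -/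
def wInner (ω : ℕ → ℝ) (f g : ℕ → ℂ) : ℂ :=
  ∑' k, f k * (starRingEnd ℂ) (g k) * (ω k : ℂ)

/-- `q` is the n-th optimal polynomial approximant of 1/f in H²_ω. -/
def IsOPA (ω : ℕ → ℝ) (f : ℕ → ℂ) (n : ℕ) (q : Polynomial ℂ) : Prop :=
  q.natDegree ≤ n ∧
  ∀ p : Polynomial ℂ, p.natDegree ≤ n →
    wNormSq ω (polyMulSeq q f - oneSeq) ≤ wNormSq ω (polyMulSeq p f - oneSeq)

/-! ### auxiliary development -/

abbrev W : ℕ → ℝ := fun k => ((k : ℝ) + 1)⁻¹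

lemma W_pos (k : ℕ) : 0 < W k := by positivity

lemma W_succ (k : ℕ) : W (k + 1) = ((k : ℝ) + 2)⁻¹ := by
  show (((k+1 : ℕ) : ℝ) + 1)⁻¹ = _
  push_cast; ring_nf

lemma W_add_le (k i : ℕ) : W (k + i) ≤ W k := by
  apply inv_anti₀ (by positivity)
  push_cast; linarith

def shiftSeq (h : ℕ → ℂ) : ℕ → ℂ := fun n => Nat.casesOn n 0 (fun m => h m)

@[simp] lemma shiftSeq_zero (h : ℕ → ℂ) : shiftSeq h 0 = 0 := rfl
@[simp] lemma shiftSeq_succ (h : ℕ → ℂ) (k : ℕ) : shiftSeq h (k + 1) = h k := rfl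

lemma memHw_add {u v : ℕ → ℂ} (hu : MemHw W u) (hv : MemHw W v) : MemHw W (u + v) := by
  apply Summable.of_nonneg_of_le (fun k => by positivity) (fun k => ?_)
    ((hu.mul_left 2).add (hv.mul_left 2))
  have h1 : ‖u k + v k‖ ^ 2 ≤ 2 * ‖u k‖ ^ 2 + 2 * ‖v k‖ ^ 2 := by
    nlinarith [norm_add_le (u k) (v k), sq_nonneg (‖u k‖ - ‖v k‖),
      norm_nonneg (u k + v k), norm_nonneg (u k), norm_nonneg (v k)]
  have := mul_le_mul_of_nonneg_right h1 (W_pos k).le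
  calc ‖(u + v) k‖ ^ 2 * W k = ‖u k + v k‖ ^ 2 * W k := rfl
    _ ≤ (2 * ‖u k‖ ^ 2 + 2 * ‖v k‖ ^ 2) * W k := this
    _ = 2 * (‖u k‖ ^ 2 * W k) + 2 * (‖v k‖ ^ 2 * W k) := by ring

lemma memHw_smul (a : ℂ) {v : ℕ → ℂ} (hv : MemHw W v) : MemHw W (a • v) := by
  apply (hv.mul_left (‖a‖ ^ 2)).congr
  intro k
  simp only [Pi.smul_apply, smul_eq_mul, norm_mul, mul_pow]
  ring

lemma memHw_neg {v : ℕ → ℂ} (hv : MemHw W v) : MemHw W (-v) := by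
  apply hv.congr; intro k; simp

lemma memHw_sub {u v : ℕ → ℂ} (hu : MemHw W u) (hv : MemHw W v) : MemHw W (u - v) := by
  have := memHw_add hu (memHw_neg hv)
  simpa [sub_eq_add_neg] using this

lemma memHw_oneSeq : MemHw W oneSeq := by
  apply summable_of_ne_finset_zero (s := {0})
  intro k hk
  simp only [Finset.mem_singleton] at hk
  simp [oneSeq, hk]

lemma polyMulSeq_add (p q : Polynomial ℂ) (f : ℕ → ℂ) :
    polyMulSeq (p + q) f = polyMulSeq p f + polyMulSeq q f := by
  funext n
  simp [polyMulSeq, add_mul, Finset.sum_add_distrib]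

lemma polyMulSeq_sub (p q : Polynomial ℂ) (f : ℕ → ℂ) :
    polyMulSeq (p - q) f = polyMulSeq p f - polyMulSeq q f := by
  funext n
  simp [polyMulSeq, sub_mul, Finset.sum_sub_distrib]

lemma polyMulSeq_C_mul (a : ℂ) (p : Polynomial ℂ) (f : ℕ → ℂ) :
    polyMulSeq (Polynomial.C a * p) f = a • polyMulSeq p f := by
  funext n
  simp [polyMulSeq, Polynomial.coeff_C_mul, Finset.mul_sum, mul_assoc]

lemma polyMulSeq_one (f : ℕ → ℂ) : polyMulSeq 1 f = f := by
  funext n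
  simp [polyMulSeq, Polynomial.coeff_one, ite_mul]

lemma polyMulSeq_zero (f : ℕ → ℂ) : polyMulSeq 0 f = 0 := by
  funext n; simp [polyMulSeq]

lemma polyMulSeq_C (a : ℂ) (f : ℕ → ℂ) : polyMulSeq (Polynomial.C a) f = a • f := by
  have := polyMulSeq_C_mul a 1 f
  simpa [polyMulSeq_one] using this

lemma polyMulSeq_X_mul (p : Polynomial ℂ) (f : ℕ → ℂ) :
    polyMulSeq (Polynomial.X * p) f = shiftSeq (polyMulSeq p f) := by
  funext n
  cases n with
  | zero => simp [polyMulSeq]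
  | succ m =>
    show _ = polyMulSeq p f m
    rw [polyMulSeq, Finset.sum_range_succ']
    simp [Polynomial.coeff_X_mul, polyMulSeq]

lemma polyMulSeq_X (f : ℕ → ℂ) : polyMulSeq Polynomial.X f = shiftSeq f := by
  rw [← mul_one (Polynomial.X : Polynomial ℂ), polyMulSeq_X_mul, polyMulSeq_one]

lemma polyMulSeq_monomial (i : ℕ) (a : ℂ) (f : ℕ → ℂ) :
    polyMulSeq (Polynomial.monomial i a) f = fun n => if i ≤ n then a * f (n - i) else 0 := by
  funext n
  simp only [polyMulSeq, Polynomial.coeff_monomial, ite_mul, zero_mul]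
  rw [Finset.sum_ite_eq]
  simp [Nat.lt_succ_iff]

lemma mem_polyMulSeq (p : Polynomial ℂ) {f : ℕ → ℂ} (hf : MemHw W f) :
    MemHw W (polyMulSeq p f) := by
  induction p using Polynomial.induction_on' with
  | add p q hp hq => rw [polyMulSeq_add]; exact memHw_add hp hq
  | monomial i a =>
    rw [polyMulSeq_monomial]
    have h2 : Summable (fun k => ‖a * f k‖ ^ 2 * W (k + i)) := by
      apply Summable.of_nonneg_of_le (fun k => by positivity) (fun k => ?_)
        (hf.mul_left (‖a‖ ^ 2))
      rw [norm_mul, mul_pow, mul_assoc]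
      exact mul_le_mul_of_nonneg_left
        (mul_le_mul_of_nonneg_left (W_add_le k i) (by positivity)) (by positivity)
    apply (summable_nat_add_iff i).mp
    apply h2.congr
    intro k
    simp [Nat.le_add_left, Nat.add_sub_cancel]
/-! ### inner product machinery -/

lemma summable_mul_norm {u v : ℕ → ℂ} (hu : MemHw W u) (hv : MemHw W v) :
    Summable (fun k => ‖u k‖ * ‖v k‖ * W k) := by
  apply Summable.of_nonneg_of_le (fun k => by positivity) (fun k => ?_)
    ((hu.mul_left (1/2)).add (hv.mul_left (1/2)))
  have h1 : ‖u k‖ * ‖v k‖ ≤ 1/2 * ‖u k‖ ^ 2 + 1/2 * ‖v k‖ ^ 2 := by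
    nlinarith [sq_nonneg (‖u k‖ - ‖v k‖)]
  have := mul_le_mul_of_nonneg_right h1 (W_pos k).le
  calc ‖u k‖ * ‖v k‖ * W k ≤ (1/2 * ‖u k‖ ^ 2 + 1/2 * ‖v k‖ ^ 2) * W k := this
    _ = 1/2 * (‖u k‖ ^ 2 * W k) + 1/2 * (‖v k‖ ^ 2 * W k) := by ring

lemma summable_inner {u v : ℕ → ℂ} (hu : MemHw W u) (hv : MemHw W v) :
    Summable (fun k => u k * (starRingEnd ℂ) (v k) * ((W k : ℝ) : ℂ)) := by
  apply Summable.of_norm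
  apply (summable_mul_norm hu hv).congr
  intro k
  rw [norm_mul, norm_mul, RCLike.norm_conj]
  congr 1
  rw [Complex.norm_real, Real.norm_of_nonneg (W_pos k).le]

lemma wNormSq_nonneg (u : ℕ → ℂ) : 0 ≤ wNormSq W u :=
  tsum_nonneg (fun k => by positivity)

lemma wInner_self (u : ℕ → ℂ) : wInner W u u = ((wNormSq W u : ℝ) : ℂ) := by
  rw [wNormSq, wInner, Complex.ofReal_tsum]
  apply tsum_congr
  intro k
  rw [Complex.mul_conj]
  norm_cast
  rw [Complex.normSq_eq_norm_sq]

lemma wInner_smul_left (a : ℂ) (u v : ℕ → ℂ) :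
    wInner W (a • u) v = a * wInner W u v := by
  rw [wInner, wInner, ← tsum_mul_left]
  apply tsum_congr; intro k
  simp only [Pi.smul_apply, smul_eq_mul]; ring

lemma wInner_smul_right (a : ℂ) (u v : ℕ → ℂ) :
    wInner W u (a • v) = (starRingEnd ℂ) a * wInner W u v := by
  rw [wInner, wInner, ← tsum_mul_left]
  apply tsum_congr; intro k
  simp only [Pi.smul_apply, smul_eq_mul, map_mul]; ring

lemma wInner_neg_right (u v : ℕ → ℂ) : wInner W u (-v) = - wInner W u v := by
  rw [wInner, wInner, ← tsum_neg]
  apply tsum_congr; intro k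
  simp [map_neg]

lemma wInner_add_left {u1 u2 v : ℕ → ℂ} (h1 : MemHw W u1) (h2 : MemHw W u2) (hv : MemHw W v) :
    wInner W (u1 + u2) v = wInner W u1 v + wInner W u2 v := by
  rw [wInner, wInner, wInner, ← Summable.tsum_add (summable_inner h1 hv) (summable_inner h2 hv)]
  apply tsum_congr; intro k
  simp only [Pi.add_apply]; ring

lemma wInner_sub_right {v u w : ℕ → ℂ} (hv : MemHw W v) (hu : MemHw W u) (hw : MemHw W w) :
    wInner W v (u - w) = wInner W v u - wInner W v w := by
  rw [wInner, wInner, wInner, ← Summable.tsum_sub (summable_inner hv hu) (summable_inner hv hw)]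
  apply tsum_congr; intro k
  simp only [Pi.sub_apply, map_sub]; ring

lemma wInner_oneSeq (v : ℕ → ℂ) : wInner W v oneSeq = v 0 := by
  rw [wInner, tsum_eq_single 0]
  · norm_num [oneSeq]
  · intro k hk
    simp [oneSeq, hk]

lemma norm_sq_complex (z : ℂ) : ‖z‖ ^ 2 = z.re ^ 2 + z.im ^ 2 := by
  rw [Complex.sq_norm, Complex.normSq_apply]; ring

lemma wNormSq_add_smul {u v : ℕ → ℂ} (hu : MemHw W u) (hv : MemHw W v) (t : ℂ) :
    wNormSq W (u + t • v)
      = wNormSq W u + 2 * (t * wInner W v u).re + ‖t‖ ^ 2 * wNormSq W v := by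
  have hvu := summable_inner hv hu
  have hexp : ∀ k, ‖(u + t • v) k‖ ^ 2 * W k
      = ‖u k‖ ^ 2 * W k + 2 * ((t * (v k * (starRingEnd ℂ) (u k) * ((W k : ℝ) : ℂ))).re)
        + ‖t‖ ^ 2 * (‖v k‖ ^ 2 * W k) := by
    intro k
    have h0 : (u + t • v) k = u k + t * v k := rfl
    rw [h0]
    simp only [norm_sq_complex, Complex.add_re, Complex.add_im, Complex.mul_re, Complex.mul_im,
      Complex.conj_re, Complex.conj_im, Complex.ofReal_re, Complex.ofReal_im]
    ring
  have s2 : Summable (fun k => 2 * ((t * (v k * (starRingEnd ℂ) (u k) * ((W k : ℝ) : ℂ))).re)) := by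
    apply Summable.mul_left
    exact ((hvu.mul_left t).hasSum.mapL Complex.reCLM).summable
  have s3 : Summable (fun k => ‖t‖ ^ 2 * (‖v k‖ ^ 2 * W k)) := (hv.mul_left _)
  calc wNormSq W (u + t • v)
      = ∑' k, (‖u k‖ ^ 2 * W k
          + 2 * ((t * (v k * (starRingEnd ℂ) (u k) * ((W k : ℝ) : ℂ))).re)
          + ‖t‖ ^ 2 * (‖v k‖ ^ 2 * W k)) := tsum_congr hexp
    _ = wNormSq W u + 2 * (t * wInner W v u).re + ‖t‖ ^ 2 * wNormSq W v := by
        have e2 : ∑' k, 2 * ((t * (v k * (starRingEnd ℂ) (u k) * ((W k : ℝ) : ℂ))).re)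
            = 2 * (t * wInner W v u).re := by
          rw [tsum_mul_left]
          congr 1
          rw [← Complex.re_tsum (hvu.mul_left t), tsum_mul_left, wInner]
        have e3 : ∑' k, ‖t‖ ^ 2 * (‖v k‖ ^ 2 * W k) = ‖t‖ ^ 2 * wNormSq W v := by
          rw [tsum_mul_left, wNormSq]
        rw [Summable.tsum_add (hu.add s2) s3, Summable.tsum_add hu s2, e2, e3]
        rfl

lemma wInner_eq_zero_of_min {u v : ℕ → ℂ} (hu : MemHw W u) (hv : MemHw W v)
    (hmin : ∀ t : ℂ, wNormSq W u ≤ wNormSq W (u + t • v)) : wInner W v u = 0 := by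
  by_contra hI
  set I := wInner W v u with hIdef
  have hNv : 0 ≤ wNormSq W v := wNormSq_nonneg v
  set s : ℝ := (wNormSq W v + 1)⁻¹ with hs
  have hspos : 0 < s := by positivity
  have hs1 : s * (wNormSq W v + 1) = 1 := by
    rw [hs]; field_simp
  have h1 := hmin (-(s : ℂ) * (starRingEnd ℂ) I)
  rw [wNormSq_add_smul hu hv] at h1
  have hSpos : 0 < Complex.normSq I := Complex.normSq_pos.mpr hI
  have hre : ((-(s : ℂ) * (starRingEnd ℂ) I) * I).re = -(s * Complex.normSq I) := by
    have : (-(s : ℂ) * (starRingEnd ℂ) I) * I = ((-(s * Complex.normSq I) : ℝ) : ℂ) := by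
      rw [show (-(s : ℂ) * (starRingEnd ℂ) I) * I = -(s : ℂ) * (I * (starRingEnd ℂ) I) from by ring,
        Complex.mul_conj]
      push_cast; ring
    rw [this, Complex.ofReal_re]
  have hnorm : ‖-(s : ℂ) * (starRingEnd ℂ) I‖ ^ 2 = s ^ 2 * Complex.normSq I := by
    rw [norm_mul, norm_neg, Complex.norm_real, RCLike.norm_conj, Real.norm_of_nonneg hspos.le,
      mul_pow, Complex.sq_norm]
  rw [hre, hnorm] at h1
  -- h1 : N u ≤ N u + 2 * (-(s*S)) + s^2 * S * N v
  have key : s * wNormSq W v < 1 := by nlinarith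
  nlinarith [mul_pos hspos hSpos, mul_pos (mul_pos hspos hspos) hSpos]

lemma opa_orth {f : ℕ → ℂ} {n : ℕ} {q : Polynomial ℂ} (hf : MemHw W f)
    (hopa : IsOPA W f n q) {r : Polynomial ℂ} (hr : r.natDegree ≤ n) :
    wInner W (polyMulSeq r f) (polyMulSeq q f - oneSeq) = 0 := by
  apply wInner_eq_zero_of_min (memHw_sub (mem_polyMulSeq q hf) memHw_oneSeq)
    (mem_polyMulSeq r hf)
  intro t
  have heq : polyMulSeq q f - oneSeq + t • polyMulSeq r f
      = polyMulSeq (q + Polynomial.C t * r) f - oneSeq := by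
    rw [polyMulSeq_add, polyMulSeq_C_mul]
    funext k
    simp only [Pi.add_apply, Pi.sub_apply, Pi.smul_apply, smul_eq_mul]
    ring
  rw [heq]
  apply hopa.2
  exact le_trans (Polynomial.natDegree_add_le q (Polynomial.C t * r))
    (max_le hopa.1 (le_trans (Polynomial.natDegree_C_mul_le t r) hr))
/-! ### the key inequality -/

lemma key_ineq (F : ℕ → ℝ) (hF : ∀ k, 0 ≤ F k)
    (hs : Summable (fun k => F k ^ 2 * W (k + 1)))
    (hs' : Summable (fun k => F k * F (k + 1) * W (k + 1))) :
    ∑' k, F k * F (k + 1) * W (k + 1) ≤ 3 / (2 * Real.sqrt 2) * ∑' k, F k ^ 2 * W (k + 1) := by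
  have hs2 : (0 : ℝ) < Real.sqrt 2 := Real.sqrt_pos.mpr (by norm_num)
  have hss : Real.sqrt 2 * Real.sqrt 2 = 2 := Real.mul_self_sqrt (by norm_num)
  set s2 := Real.sqrt 2 with hs2def
  set a : ℕ → ℝ := fun k => ((k : ℝ) + 3) / (2 * s2 * (((k : ℝ) + 1) * ((k : ℝ) + 2))) with ha
  set c : ℕ → ℝ := fun k => (k : ℝ) / (s2 * (((k : ℝ) + 1) * ((k : ℝ) + 2))) with hc
  have hapos : ∀ k, 0 < a k := fun k => by
    rw [ha]; positivity
  have hcnn : ∀ k, 0 ≤ c k := fun k => by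
    rw [hc]; positivity
  -- per-term AM-GM
  have key : ∀ k, F k * F (k + 1) * W (k + 1) ≤ a k * F k ^ 2 + c (k + 1) * F (k + 1) ^ 2 := by
    intro k
    have hac : a k * c (k + 1) = (1 / (2 * ((k : ℝ) + 2))) ^ 2 := by
      rw [ha, hc]
      push_cast
      have h1 : ((k : ℝ) + 1) ≠ 0 := by positivity
      have h2 : ((k : ℝ) + 2) ≠ 0 := by positivity
      have h3 : ((k : ℝ) + 3) ≠ 0 := by positivity
      have hsq : s2 ^ 2 = 2 := by nlinarith
      field_simp
      ring_nf
      simp only [hsq]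
      ring_nf
    have h1 : Real.sqrt (a k) * Real.sqrt (c (k + 1)) = 1 / (2 * ((k : ℝ) + 2)) := by
      rw [← Real.sqrt_mul (hapos k).le, hac, Real.sqrt_sq (by positivity)]
    have h2 : F k * F (k + 1) * W (k + 1)
        = 2 * (Real.sqrt (a k) * F k) * (Real.sqrt (c (k + 1)) * F (k + 1)) := by
      rw [show 2 * (Real.sqrt (a k) * F k) * (Real.sqrt (c (k + 1)) * F (k + 1))
          = 2 * (Real.sqrt (a k) * Real.sqrt (c (k + 1))) * (F k * F (k + 1)) from by ring,
        h1, W_succ]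
      have h2' : ((k : ℝ) + 2) ≠ 0 := by positivity
      field_simp
    calc F k * F (k + 1) * W (k + 1)
        = 2 * (Real.sqrt (a k) * F k) * (Real.sqrt (c (k + 1)) * F (k + 1)) := h2
      _ ≤ (Real.sqrt (a k) * F k) ^ 2 + (Real.sqrt (c (k + 1)) * F (k + 1)) ^ 2 :=
          two_mul_le_add_sq _ _
      _ = a k * F k ^ 2 + c (k + 1) * F (k + 1) ^ 2 := by
          rw [mul_pow, mul_pow, Real.sq_sqrt (hapos k).le, Real.sq_sqrt (hcnn _)]
  -- summabilities
  have haW : ∀ k, a k ≤ 3 / (2 * s2) * W (k + 1) := by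
    intro k
    rw [ha, W_succ]
    rw [div_le_iff₀ (by positivity)]
    have : 3 / (2 * s2) * ((k : ℝ) + 2)⁻¹ * (2 * s2 * (((k : ℝ) + 1) * ((k : ℝ) + 2)))
        = 3 * ((k : ℝ) + 1) := by
      field_simp
    rw [this]
    linarith [Nat.cast_nonneg (α := ℝ) k]
  have hSa : Summable (fun k => a k * F k ^ 2) := by
    apply Summable.of_nonneg_of_le (fun k => by positivity) (fun k => ?_)
      (hs.mul_left (3 / (2 * s2)))
    calc a k * F k ^ 2 ≤ (3 / (2 * s2) * W (k + 1)) * F k ^ 2 := by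
          exact mul_le_mul_of_nonneg_right (haW k) (by positivity)
      _ = 3 / (2 * s2) * (F k ^ 2 * W (k + 1)) := by ring
  have hcW : ∀ k, c (k + 1) ≤ W (k + 2) := by
    intro k
    rw [hc, show W (k + 2) = ((k : ℝ) + 3)⁻¹ from by
      show (((k + 2 : ℕ) : ℝ) + 1)⁻¹ = _
      push_cast; ring_nf]
    push_cast
    rw [div_le_iff₀ (by positivity)]
    have hs2ge : (1 : ℝ) ≤ s2 := by nlinarith
    have : ((k : ℝ) + 3)⁻¹ * (s2 * (((k : ℝ) + 1 + 1) * ((k : ℝ) + 1 + 2)))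
        = s2 * ((k : ℝ) + 2) := by
      field_simp
      ring
    rw [this]
    nlinarith [Nat.cast_nonneg (α := ℝ) k]
  have hSc' : Summable (fun k => c (k + 1) * F (k + 1) ^ 2) := by
    apply Summable.of_nonneg_of_le (fun k => by positivity) (fun k => ?_)
      ((summable_nat_add_iff 1).mpr hs)
    calc c (k + 1) * F (k + 1) ^ 2 ≤ W (k + 2) * F (k + 1) ^ 2 :=
          mul_le_mul_of_nonneg_right (hcW k) (by positivity)
      _ = F (k + 1) ^ 2 * W (k + 1 + 1) := mul_comm _ _
  have hSc : Summable (fun k => c k * F k ^ 2) := by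
    apply (summable_nat_add_iff 1).mp
    exact hSc'
  -- combine
  have hcomb : ∀ k, a k * F k ^ 2 + c k * F k ^ 2 = 3 / (2 * s2) * (F k ^ 2 * W (k + 1)) := by
    intro k
    rw [W_succ, ha, hc]
    have h1 : ((k : ℝ) + 1) ≠ 0 := by positivity
    have h2 : ((k : ℝ) + 2) ≠ 0 := by positivity
    have hs2ne : s2 ≠ 0 := hs2.ne'
    field_simp
    ring
  calc ∑' k, F k * F (k + 1) * W (k + 1)
      ≤ ∑' k, (a k * F k ^ 2 + c (k + 1) * F (k + 1) ^ 2) :=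
        Summable.tsum_le_tsum key hs' (hSa.add hSc')
    _ = ∑' k, a k * F k ^ 2 + ∑' k, c (k + 1) * F (k + 1) ^ 2 := Summable.tsum_add hSa hSc'
    _ = ∑' k, a k * F k ^ 2 + ∑' k, c k * F k ^ 2 := by
        congr 1
        rw [Summable.tsum_eq_zero_add hSc]
        rw [hc]
        norm_num
    _ = ∑' k, (a k * F k ^ 2 + c k * F k ^ 2) := (Summable.tsum_add hSa hSc).symm
    _ = ∑' k, 3 / (2 * s2) * (F k ^ 2 * W (k + 1)) := tsum_congr hcomb
    _ = 3 / (2 * s2) * ∑' k, F k ^ 2 * W (k + 1) := tsum_mul_left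

/-! ### the lower bound -/

lemma abs_wInner_le {u v : ℕ → ℂ} (hu : MemHw W u) (hv : MemHw W v) :
    ‖wInner W u v‖ ≤ ∑' k, ‖u k‖ * ‖v k‖ * W k := by
  rw [wInner]
  have hsn : Summable (fun k => ‖u k * (starRingEnd ℂ) (v k) * ((W k : ℝ) : ℂ)‖) := by
    apply (summable_mul_norm hu hv).congr
    intro k
    rw [norm_mul, norm_mul, RCLike.norm_conj, Complex.norm_real,
      Real.norm_of_nonneg (W_pos k).le]
  calc ‖∑' k, u k * (starRingEnd ℂ) (v k) * ((W k : ℝ) : ℂ)‖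
      ≤ ∑' k, ‖u k * (starRingEnd ℂ) (v k) * ((W k : ℝ) : ℂ)‖ := norm_tsum_le_tsum_norm hsn
    _ = ∑' k, ‖u k‖ * ‖v k‖ * W k := by
        apply tsum_congr; intro k
        rw [norm_mul, norm_mul, RCLike.norm_conj, Complex.norm_real,
          Real.norm_of_nonneg (W_pos k).le]

lemma main_lower {f : ℕ → ℂ} {n : ℕ} {q : Polynomial ℂ} {z : ℂ}
    (hmem : MemHw W f) (hf0 : f 0 ≠ 0)
    (hopa : IsOPA W f n q) (hz : Polynomial.eval z q = 0) :
    2 * Real.sqrt 2 / 3 ≤ ‖z‖ := by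
  -- q is nonzero
  have hq0 : q ≠ 0 := by
    rintro rfl
    have h := opa_orth hmem hopa (r := 1) (by simp)
    rw [polyMulSeq_one, polyMulSeq_zero, zero_sub, wInner_neg_right, wInner_oneSeq] at h
    exact hf0 (neg_eq_zero.mp h)
  obtain ⟨p, hp⟩ : (Polynomial.X - Polynomial.C z) ∣ q := Polynomial.dvd_iff_isRoot.mpr hz
  have hpne : p ≠ 0 := by
    rintro rfl
    rw [mul_zero] at hp
    exact hq0 hp
  have hdq : q.natDegree = p.natDegree + 1 := by
    rw [hp, Polynomial.natDegree_mul (Polynomial.X_sub_C_ne_zero z) hpne,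
      Polynomial.natDegree_X_sub_C]
    omega
  have hdn : p.natDegree + 1 ≤ n := hdq ▸ hopa.1
  set h := polyMulSeq p f with hh
  have hmemh : MemHw W h := mem_polyMulSeq p hmem
  have hShEq : polyMulSeq (Polynomial.X * p) f = shiftSeq h := polyMulSeq_X_mul p f
  have hmemSh : MemHw W (shiftSeq h) := hShEq ▸ mem_polyMulSeq (Polynomial.X * p) hmem
  have hqf : polyMulSeq q f = shiftSeq h - z • h := by
    rw [hp, show (Polynomial.X - Polynomial.C z) * p
        = Polynomial.X * p - Polynomial.C z * p from by ring,
      polyMulSeq_sub, polyMulSeq_X_mul, polyMulSeq_C_mul]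
  have horth := opa_orth hmem hopa (r := Polynomial.X * p)
    (le_trans (Polynomial.natDegree_mul_le) (by rw [Polynomial.natDegree_X]; omega))
  rw [hShEq, hqf] at horth
  have hmz : MemHw W (z • h) := memHw_smul z hmemh
  rw [wInner_sub_right hmemSh (memHw_sub hmemSh hmz) memHw_oneSeq,
    wInner_sub_right hmemSh hmemSh hmz, wInner_oneSeq, shiftSeq_zero,
    wInner_smul_right, wInner_self] at horth
  have hkey : ((wNormSq W (shiftSeq h) : ℝ) : ℂ) = (starRingEnd ℂ) z * wInner W (shiftSeq h) h := by
    linear_combination horth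
  -- pass to absolute values
  set N := wNormSq W (shiftSeq h) with hN
  have hNabs : N = ‖z‖ * ‖wInner W (shiftSeq h) h‖ := by
    have h2 := congrArg norm hkey
    rwa [norm_mul, RCLike.norm_conj, Complex.norm_real, Real.norm_of_nonneg (wNormSq_nonneg _)] at h2
  have hsum1 : Summable (fun k => ‖shiftSeq h k‖ * ‖h k‖ * W k) := summable_mul_norm hmemSh hmemh
  have hre : ∑' k, ‖shiftSeq h k‖ * ‖h k‖ * W k = ∑' k, ‖h k‖ * ‖h (k + 1)‖ * W (k + 1) := by
    rw [Summable.tsum_eq_zero_add hsum1]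
    simp only [shiftSeq_zero, shiftSeq_succ, norm_zero, zero_mul, zero_add]
  have hNre : N = ∑' k, ‖h k‖ ^ 2 * W (k + 1) := by
    rw [hN, wNormSq, Summable.tsum_eq_zero_add hmemSh]
    simp only [shiftSeq_zero, shiftSeq_succ, norm_zero, zero_mul, zero_add]
    norm_num
  have hsN : Summable (fun k => ‖h k‖ ^ 2 * W (k + 1)) := by
    have h2 := (summable_nat_add_iff 1).mpr hmemSh
    apply h2.congr
    intro k
    simp
  have hsS' : Summable (fun k => ‖h k‖ * ‖h (k + 1)‖ * W (k + 1)) := by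
    have h2 := (summable_nat_add_iff 1).mpr hsum1
    apply h2.congr
    intro k
    simp only [shiftSeq_succ]
  have hki := key_ineq (fun k => ‖h k‖) (fun k => norm_nonneg _) hsN hsS'
  -- N > 0
  have hne : h p.natTrailingDegree ≠ 0 := by
    have heval : h p.natTrailingDegree = p.coeff p.natTrailingDegree * f 0 := by
      rw [hh]
      show (∑ j ∈ Finset.range (p.natTrailingDegree + 1),
        p.coeff j * f (p.natTrailingDegree - j)) = _
      rw [Finset.sum_eq_single p.natTrailingDegree]
      · simp
      · intro j hj hjne
        rw [Finset.mem_range, Nat.lt_succ_iff] at hj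
        rw [Polynomial.coeff_eq_zero_of_lt_natTrailingDegree (lt_of_le_of_ne hj hjne), zero_mul]
      · intro habs
        exact absurd (Finset.self_mem_range_succ _) habs
    rw [heval]
    apply mul_ne_zero _ hf0
    intro hcoeff
    exact hpne (Polynomial.trailingCoeff_eq_zero.mp hcoeff)
  have hNpos : 0 < N := by
    rw [hNre]
    apply Summable.tsum_pos hsN (fun k => by positivity) p.natTrailingDegree
    have : 0 < ‖h p.natTrailingDegree‖ := norm_pos_iff.mpr hne
    positivity
  -- conclude
  have hfinal : N ≤ ‖z‖ * (3 / (2 * Real.sqrt 2) * N) := by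
    calc N = ‖z‖ * ‖wInner W (shiftSeq h) h‖ := hNabs
      _ ≤ ‖z‖ * ∑' k, ‖shiftSeq h k‖ * ‖h k‖ * W k := by
          exact mul_le_mul_of_nonneg_left (abs_wInner_le hmemSh hmemh) (norm_nonneg z)
      _ = ‖z‖ * ∑' k, ‖h k‖ * ‖h (k + 1)‖ * W (k + 1) := by rw [hre]
      _ ≤ ‖z‖ * (3 / (2 * Real.sqrt 2) * ∑' k, ‖h k‖ ^ 2 * W (k + 1)) := by
          apply mul_le_mul_of_nonneg_left _ (norm_nonneg z)
          exact hki
      _ = ‖z‖ * (3 / (2 * Real.sqrt 2) * N) := by rw [← hNre]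
  have hzb : 1 ≤ ‖z‖ * (3 / (2 * Real.sqrt 2)) := by
    by_contra hcon
    push_neg at hcon
    nlinarith
  have hM : (0:ℝ) < 3 / (2 * Real.sqrt 2) := by positivity
  have hinv : 2 * Real.sqrt 2 / 3 * (3 / (2 * Real.sqrt 2)) = 1 := by
    have hs2 : (0 : ℝ) < Real.sqrt 2 := Real.sqrt_pos.mpr (by norm_num)
    field_simp
  by_contra hcon
  push_neg at hcon
  have h2 := mul_lt_mul_of_pos_right hcon hM
  rw [hinv] at h2
  linarith
/-! ### geometric series computations -/

lemma sumPoly (m : ℕ) : Summable (fun k : ℕ => (k : ℝ) ^ m * (1 / 2 : ℝ) ^ k) :=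
  summable_pow_mul_geometric_of_norm_lt_one m (by norm_num : ‖(1/2 : ℝ)‖ < 1)

lemma hGsum : Summable (fun k : ℕ => (1 / 2 : ℝ) ^ k) :=
  (sumPoly 0).congr (fun k => by ring)

lemma S1 : Summable (fun k : ℕ => ((k : ℝ) + 1) * (1 / 2 : ℝ) ^ k) :=
  ((sumPoly 1).add (sumPoly 0)).congr (fun k => by ring)

lemma S2 : Summable (fun k : ℕ => ((k : ℝ) + 1) * ((k : ℝ) + 2) * (1 / 2 : ℝ) ^ k) :=
  (((sumPoly 2).add ((sumPoly 1).mul_left 3)).add ((sumPoly 0).mul_left 2)).congr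
    (fun k => by ring)

lemma S3 : Summable (fun k : ℕ => ((k : ℝ) + 1) * ((k : ℝ) + 2) * ((k : ℝ) + 3) * (1 / 2 : ℝ) ^ k) :=
  ((((sumPoly 3).add ((sumPoly 2).mul_left 6)).add ((sumPoly 1).mul_left 11)).add
    ((sumPoly 0).mul_left 6)).congr (fun k => by ring)

lemma hG : ∑' k : ℕ, (1 / 2 : ℝ) ^ k = 2 := by
  rw [tsum_geometric_of_lt_one (by norm_num) (by norm_num)]
  norm_num

lemma hT1 : ∑' k : ℕ, ((k : ℝ) + 1) * (1 / 2 : ℝ) ^ k = 4 := by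
  have h0 := Summable.tsum_eq_zero_add S1
  have h1 : ∑' k : ℕ, (((k + 1 : ℕ) : ℝ) + 1) * (1 / 2 : ℝ) ^ (k + 1)
      = 1 / 2 * (∑' k : ℕ, ((k : ℝ) + 1) * (1 / 2 : ℝ) ^ k)
        + 1 / 2 * (∑' k : ℕ, (1 / 2 : ℝ) ^ k) := by
    rw [← tsum_mul_left, ← tsum_mul_left, ← Summable.tsum_add (S1.mul_left (1/2)) (hGsum.mul_left (1/2))]
    exact tsum_congr (fun k => by push_cast; ring)
  rw [h1, hG] at h0
  norm_num at h0
  linarith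

lemma hT2 : ∑' k : ℕ, ((k : ℝ) + 1) * ((k : ℝ) + 2) * (1 / 2 : ℝ) ^ k = 16 := by
  have h0 := Summable.tsum_eq_zero_add S2
  have h1 : ∑' k : ℕ, (((k + 1 : ℕ) : ℝ) + 1) * (((k + 1 : ℕ) : ℝ) + 2) * (1 / 2 : ℝ) ^ (k + 1)
      = 1 / 2 * (∑' k : ℕ, ((k : ℝ) + 1) * ((k : ℝ) + 2) * (1 / 2 : ℝ) ^ k)
        + (∑' k : ℕ, (((k : ℝ) + 1) * (1 / 2 : ℝ) ^ k + (1 / 2 : ℝ) ^ k)) := by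
    rw [← tsum_mul_left, ← Summable.tsum_add (S2.mul_left (1/2)) (S1.add hGsum)]
    exact tsum_congr (fun k => by push_cast; ring)
  rw [h1, Summable.tsum_add S1 hGsum, hT1, hG] at h0
  norm_num at h0
  linarith

lemma hT3 : ∑' k : ℕ, ((k : ℝ) + 1) * ((k : ℝ) + 2) * ((k : ℝ) + 3) * (1 / 2 : ℝ) ^ k = 96 := by
  have h0 := Summable.tsum_eq_zero_add S3
  have h1 : ∑' k : ℕ, (((k + 1 : ℕ) : ℝ) + 1) * (((k + 1 : ℕ) : ℝ) + 2) * (((k + 1 : ℕ) : ℝ) + 3)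
        * (1 / 2 : ℝ) ^ (k + 1)
      = 1 / 2 * (∑' k : ℕ, ((k : ℝ) + 1) * ((k : ℝ) + 2) * ((k : ℝ) + 3) * (1 / 2 : ℝ) ^ k)
        + (∑' k : ℕ, (3 / 2 * (((k : ℝ) + 1) * ((k : ℝ) + 2) * (1 / 2 : ℝ) ^ k)
            + (3 * (((k : ℝ) + 1) * (1 / 2 : ℝ) ^ k) + 3 * (1 / 2 : ℝ) ^ k))) := by
    rw [← tsum_mul_left,
      ← Summable.tsum_add (S3.mul_left (1/2)) (((S2.mul_left (3/2))).add ((S1.mul_left 3).add (hGsum.mul_left 3)))]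
    exact tsum_congr (fun k => by push_cast; ring)
  rw [h1, Summable.tsum_add ((S2.mul_left (3/2))) ((S1.mul_left 3).add (hGsum.mul_left 3)),
    Summable.tsum_add (S1.mul_left 3) (hGsum.mul_left 3), tsum_mul_left, tsum_mul_left, tsum_mul_left,
    hT2, hT1, hG] at h0
  norm_num at h0
  linarith
/-! ### the extremal example -/

def rex : ℕ → ℝ := fun k => ((k : ℝ) + 1) * ((k : ℝ) + 2) / 2 * (1 / Real.sqrt 2) ^ k

def fex : ℕ → ℂ := fun k => (((k : ℂ) + 1) * ((k : ℂ) + 2) / 2) * (1 / (Real.sqrt 2 : ℂ)) ^ k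

lemma rex_nonneg (k : ℕ) : 0 ≤ rex k := by
  simp only [rex]; positivity

lemma fex_eq (k : ℕ) : fex k = ((rex k : ℝ) : ℂ) := by
  simp only [fex, rex]
  push_cast
  ring

lemma hbase : (1 / Real.sqrt 2 : ℝ) ^ 2 = 1 / 2 := by
  rw [div_pow, one_pow, Real.sq_sqrt (by norm_num : (0:ℝ) ≤ 2)]

lemma hpow (k : ℕ) : ((1 / Real.sqrt 2 : ℝ) ^ k) ^ 2 = (1 / 2 : ℝ) ^ k := by
  rw [← pow_mul, mul_comm, pow_mul, hbase]

lemma eA (k : ℕ) : rex k ^ 2 * W k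
    = 1 / 4 * (((k : ℝ) + 1) * ((k : ℝ) + 2) * ((k : ℝ) + 3) * (1 / 2 : ℝ) ^ k)
      - 1 / 4 * (((k : ℝ) + 1) * ((k : ℝ) + 2) * (1 / 2 : ℝ) ^ k) := by
  simp only [rex]
  rw [mul_pow, hpow]
  show _ * ((k : ℝ) + 1)⁻¹ = _
  have h1 : ((k : ℝ) + 1) ≠ 0 := by positivity
  field_simp
  ring

lemma SA : Summable (fun k => rex k ^ 2 * W k) :=
  (((S3.mul_left (1/4)).sub (S2.mul_left (1/4))).congr (fun k => (eA k).symm))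

lemma hA : ∑' k, rex k ^ 2 * W k = 20 := by
  calc ∑' k, rex k ^ 2 * W k
      = ∑' k : ℕ, (1 / 4 * (((k : ℝ) + 1) * ((k : ℝ) + 2) * ((k : ℝ) + 3) * (1 / 2 : ℝ) ^ k)
        - 1 / 4 * (((k : ℝ) + 1) * ((k : ℝ) + 2) * (1 / 2 : ℝ) ^ k)) := tsum_congr eA
    _ = 20 := by
        rw [Summable.tsum_sub (S3.mul_left (1/4)) (S2.mul_left (1/4)), tsum_mul_left, tsum_mul_left,
          hT3, hT2]
        norm_num

lemma eC (k : ℕ) : rex k ^ 2 * W (k + 1)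
    = 1 / 4 * (((k : ℝ) + 1) * ((k : ℝ) + 2) * ((k : ℝ) + 3) * (1 / 2 : ℝ) ^ k)
      - 1 / 2 * (((k : ℝ) + 1) * ((k : ℝ) + 2) * (1 / 2 : ℝ) ^ k) := by
  simp only [rex]
  rw [mul_pow, hpow, W_succ]
  have h2 : ((k : ℝ) + 2) ≠ 0 := by positivity
  field_simp
  ring

lemma SC : Summable (fun k => rex k ^ 2 * W (k + 1)) :=
  (((S3.mul_left (1/4)).sub (S2.mul_left (1/2))).congr (fun k => (eC k).symm))

lemma hC : ∑' k, rex k ^ 2 * W (k + 1) = 16 := by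
  calc ∑' k, rex k ^ 2 * W (k + 1)
      = ∑' k : ℕ, (1 / 4 * (((k : ℝ) + 1) * ((k : ℝ) + 2) * ((k : ℝ) + 3) * (1 / 2 : ℝ) ^ k)
        - 1 / 2 * (((k : ℝ) + 1) * ((k : ℝ) + 2) * (1 / 2 : ℝ) ^ k)) := tsum_congr eC
    _ = 16 := by
        rw [Summable.tsum_sub (S3.mul_left (1/4)) (S2.mul_left (1/2)), tsum_mul_left, tsum_mul_left,
          hT3, hT2]
        norm_num

lemma eB (k : ℕ) : rex k * rex (k + 1) * W (k + 1)
    = 1 / (4 * Real.sqrt 2)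
      * (((k : ℝ) + 1) * ((k : ℝ) + 2) * ((k : ℝ) + 3) * (1 / 2 : ℝ) ^ k) := by
  simp only [rex]
  rw [W_succ]
  push_cast
  rw [pow_succ, show ((1:ℝ)/2) ^ k = ((1 / Real.sqrt 2) ^ k) ^ 2 from (hpow k).symm]
  have h2 : ((k : ℝ) + 2) ≠ 0 := by positivity
  have hsne : Real.sqrt 2 ≠ 0 := (Real.sqrt_pos.mpr (by norm_num)).ne'
  field_simp
  ring

lemma SB : Summable (fun k => rex k * rex (k + 1) * W (k + 1)) :=
  ((S3.mul_left (1 / (4 * Real.sqrt 2))).congr (fun k => (eB k).symm))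

lemma hB : ∑' k, rex k * rex (k + 1) * W (k + 1) = 12 * Real.sqrt 2 := by
  have hss : Real.sqrt 2 * Real.sqrt 2 = 2 := Real.mul_self_sqrt (by norm_num)
  have hsne : Real.sqrt 2 ≠ 0 := (Real.sqrt_pos.mpr (by norm_num)).ne'
  calc ∑' k, rex k * rex (k + 1) * W (k + 1)
      = ∑' k : ℕ, (1 / (4 * Real.sqrt 2)
          * (((k : ℝ) + 1) * ((k : ℝ) + 2) * ((k : ℝ) + 3) * (1 / 2 : ℝ) ^ k)) := tsum_congr eB
    _ = 1 / (4 * Real.sqrt 2) * 96 := by rw [tsum_mul_left, hT3]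
    _ = 12 * Real.sqrt 2 := by
        have hss2 : Real.sqrt 2 ^ 2 = 2 := Real.sq_sqrt (by norm_num)
        field_simp
        linarith [hss2]

/-! ### real shifted sequence -/

def rsex : ℕ → ℝ := fun n => Nat.casesOn n 0 (fun m => rex m)

lemma hfexE : fex = fun k => ((rex k : ℝ) : ℂ) := funext fex_eq

lemma hSfexE : shiftSeq fex = fun k => ((rsex k : ℝ) : ℂ) := by
  funext k
  cases k with
  | zero => simp [rsex]
  | succ m => simp [rsex, fex_eq]

lemma wInner_ofReal (r s : ℕ → ℝ) :
    wInner W (fun k => ((r k : ℝ) : ℂ)) (fun k => ((s k : ℝ) : ℂ))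
      = ((∑' k, r k * s k * W k : ℝ) : ℂ) := by
  rw [wInner, Complex.ofReal_tsum]
  exact tsum_congr fun k => by rw [Complex.conj_ofReal]; push_cast; ring

lemma SB' : Summable (fun k => rsex k * rex k * W k) := by
  apply (summable_nat_add_iff 1).mp
  exact SB.congr (fun k => by rfl)

lemma SB'' : Summable (fun k => rex k * rsex k * W k) :=
  SB'.congr (fun k => by ring)

lemma SC' : Summable (fun k => rsex k * rsex k * W k) := by
  apply (summable_nat_add_iff 1).mp
  exact (SC.congr (fun k => by show rex k ^ 2 * W (k+1) = _ ; rw [sq]; rfl))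

lemma tA : ∑' k, rex k * rex k * W k = 20 := by
  calc ∑' k, rex k * rex k * W k = ∑' k, rex k ^ 2 * W k := tsum_congr (fun k => by ring)
    _ = 20 := hA

lemma tB1 : ∑' k, rsex k * rex k * W k = 12 * Real.sqrt 2 := by
  rw [Summable.tsum_eq_zero_add SB']
  show (0 : ℝ) * rex 0 * W 0 + ∑' k, rex k * rex (k + 1) * W (k + 1) = _
  rw [hB]
  ring

lemma tB2 : ∑' k, rex k * rsex k * W k = 12 * Real.sqrt 2 := by
  rw [← tB1]
  exact tsum_congr (fun k => by ring)

lemma tC : ∑' k, rsex k * rsex k * W k = 16 := by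
  rw [Summable.tsum_eq_zero_add SC']
  show (0 : ℝ) * (0 : ℝ) * W 0 + ∑' k, rex k * rex k * W (k + 1) = _
  rw [show ∑' k, rex k * rex k * W (k + 1) = ∑' k, rex k ^ 2 * W (k + 1) from
    tsum_congr (fun k => by ring), hC]
  ring

lemma wff : wInner W fex fex = ((20 : ℝ) : ℂ) := by
  rw [hfexE, wInner_ofReal, tA]

lemma wsf : wInner W (shiftSeq fex) fex = ((12 * Real.sqrt 2 : ℝ) : ℂ) := by
  rw [hSfexE, hfexE, wInner_ofReal, tB1]

lemma wfs : wInner W fex (shiftSeq fex) = ((12 * Real.sqrt 2 : ℝ) : ℂ) := by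
  rw [hSfexE, hfexE, wInner_ofReal, tB2]

lemma wss : wInner W (shiftSeq fex) (shiftSeq fex) = ((16 : ℝ) : ℂ) := by
  rw [hSfexE, wInner_ofReal, tC]
/-! ### the optimal approximant for fex -/

def z0r : ℝ := 2 * Real.sqrt 2 / 3
def ccr : ℝ := -(3 * Real.sqrt 2 / 8)

def qex : Polynomial ℂ :=
  Polynomial.C ((ccr : ℝ) : ℂ) * (Polynomial.X - Polynomial.C ((z0r : ℝ) : ℂ))

lemma mem_fex : MemHw W fex := by
  apply SA.congr
  intro k
  rw [fex_eq k, Complex.norm_real, Real.norm_of_nonneg (rex_nonneg k)]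

lemma mem_Sfex : MemHw W (shiftSeq fex) := by
  rw [← polyMulSeq_X]
  exact mem_polyMulSeq _ mem_fex

lemma mem_u : MemHw W (polyMulSeq qex fex - oneSeq) :=
  memHw_sub (mem_polyMulSeq _ mem_fex) memHw_oneSeq

lemma hqmul : polyMulSeq qex fex
    = ((ccr : ℝ) : ℂ) • (shiftSeq fex - ((z0r : ℝ) : ℂ) • fex) := by
  simp only [qex]
  rw [polyMulSeq_C_mul, polyMulSeq_sub, polyMulSeq_X, polyMulSeq_C]

lemma hfex0 : fex 0 = 1 := by
  simp [fex]

lemma horthf : wInner W fex (polyMulSeq qex fex - oneSeq) = 0 := by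
  have hmidmem : MemHw W (((z0r : ℝ) : ℂ) • fex) := memHw_smul _ mem_fex
  rw [hqmul,
    wInner_sub_right mem_fex (memHw_smul _ (memHw_sub mem_Sfex hmidmem)) memHw_oneSeq,
    wInner_oneSeq, wInner_smul_right,
    wInner_sub_right mem_fex mem_Sfex hmidmem,
    wInner_smul_right, wfs, wff, hfex0,
    Complex.conj_ofReal, Complex.conj_ofReal]
  have hss : Real.sqrt 2 * Real.sqrt 2 = 2 := Real.mul_self_sqrt (by norm_num)
  norm_cast
  simp only [z0r, ccr]
  linear_combination (1/2 : ℝ) * hss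

lemma horths : wInner W (shiftSeq fex) (polyMulSeq qex fex - oneSeq) = 0 := by
  have hmidmem : MemHw W (((z0r : ℝ) : ℂ) • fex) := memHw_smul _ mem_fex
  rw [hqmul,
    wInner_sub_right mem_Sfex (memHw_smul _ (memHw_sub mem_Sfex hmidmem)) memHw_oneSeq,
    wInner_oneSeq, shiftSeq_zero, wInner_smul_right,
    wInner_sub_right mem_Sfex mem_Sfex hmidmem,
    wInner_smul_right, wss, wsf,
    Complex.conj_ofReal, Complex.conj_ofReal]
  have hss : Real.sqrt 2 * Real.sqrt 2 = 2 := Real.mul_self_sqrt (by norm_num)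
  rw [sub_zero]
  norm_cast
  simp only [z0r, ccr]
  linear_combination (3 * Real.sqrt 2) * hss

lemma horthAll : ∀ r : Polynomial ℂ, r.natDegree ≤ 1 →
    wInner W (polyMulSeq r fex) (polyMulSeq qex fex - oneSeq) = 0 := by
  intro r hr
  have hrw := Polynomial.eq_X_add_C_of_natDegree_le_one hr
  rw [hrw, polyMulSeq_add, polyMulSeq_C_mul, polyMulSeq_X, polyMulSeq_C,
    wInner_add_left (memHw_smul _ mem_Sfex) (memHw_smul _ mem_fex) mem_u,
    wInner_smul_left, wInner_smul_left, horthf, horths]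
  ring

lemma hdeg_qex : qex.natDegree ≤ 1 :=
  le_trans (Polynomial.natDegree_C_mul_le _ _) (le_of_eq (Polynomial.natDegree_X_sub_C _))

lemma isopa_main : IsOPA W fex 1 qex := by
  refine ⟨hdeg_qex, ?_⟩
  intro p hp
  have hdecomp : polyMulSeq p fex - oneSeq
      = (polyMulSeq qex fex - oneSeq) + (1 : ℂ) • polyMulSeq (p - qex) fex := by
    rw [polyMulSeq_sub]
    funext k
    simp only [Pi.add_apply, Pi.sub_apply, Pi.smul_apply, smul_eq_mul, one_mul]
    ring
  rw [hdecomp, wNormSq_add_smul mem_u (mem_polyMulSeq _ mem_fex),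
    horthAll (p - qex) (le_trans (Polynomial.natDegree_sub_le p qex) (max_le hp hdeg_qex))]
  simp only [mul_zero, Complex.zero_re, norm_one, one_pow, one_mul, add_zero]
  linarith [wNormSq_nonneg (polyMulSeq (p - qex) fex)]

lemma heval : Polynomial.eval ((z0r : ℝ) : ℂ) qex = 0 := by
  simp [qex]

lemma habs : ‖((z0r : ℝ) : ℂ)‖ = 2 * Real.sqrt 2 / 3 := by
  rw [Complex.norm_real, Real.norm_eq_abs]
  simp only [z0r]
  rw [abs_of_nonneg (by positivity)]

lemma fex_ne : fex ≠ 0 := by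
  intro hcon
  have h1 := congrFun hcon 0
  rw [hfex0] at h1
  simp at h1

lemma fex0_ne : fex 0 ≠ 0 := by
  rw [hfex0]; exact one_ne_zero


/-- In the Bergman space A² (ω_k = 1/(k+1)), some opa has a zero strictly inside the
disk; the minimal modulus of such a zero is 2√2/3, attained by f(z) = (1 - z/√2)^{-3}. -/
theorem stmt_13 :
    (∃ r ∈ {r : ℝ | ∃ (f : ℕ → ℂ) (n : ℕ) (q : Polynomial ℂ) (z : ℂ),
        MemHw (fun k => ((k : ℝ) + 1)⁻¹) f ∧ f ≠ 0 ∧ f 0 ≠ 0 ∧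
        IsOPA (fun k => ((k : ℝ) + 1)⁻¹) f n q ∧ q.eval z = 0 ∧ ‖z‖ = r},
      r < 1) ∧
    IsLeast {r : ℝ | ∃ (f : ℕ → ℂ) (n : ℕ) (q : Polynomial ℂ) (z : ℂ),
        MemHw (fun k => ((k : ℝ) + 1)⁻¹) f ∧ f ≠ 0 ∧ f 0 ≠ 0 ∧
        IsOPA (fun k => ((k : ℝ) + 1)⁻¹) f n q ∧ q.eval z = 0 ∧ ‖z‖ = r}
      (2 * Real.sqrt 2 / 3) ∧
    (∃ (n : ℕ) (q : Polynomial ℂ) (z : ℂ),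
      IsOPA (fun k => ((k : ℝ) + 1)⁻¹)
        (fun k => (((k : ℂ) + 1) * ((k : ℂ) + 2) / 2) * (1 / (Real.sqrt 2 : ℂ)) ^ k) n q ∧
      q.eval z = 0 ∧ ‖z‖ = 2 * Real.sqrt 2 / 3) := by
  have hmemb : (2 * Real.sqrt 2 / 3) ∈ {r : ℝ | ∃ (f : ℕ → ℂ) (n : ℕ) (q : Polynomial ℂ) (z : ℂ),
      MemHw (fun k => ((k : ℝ) + 1)⁻¹) f ∧ f ≠ 0 ∧ f 0 ≠ 0 ∧
      IsOPA (fun k => ((k : ℝ) + 1)⁻¹) f n q ∧ q.eval z = 0 ∧ ‖z‖ = r} :=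
    ⟨fex, 1, qex, ((z0r : ℝ) : ℂ), mem_fex, fex_ne, fex0_ne, isopa_main, heval, habs⟩
  have hss : Real.sqrt 2 * Real.sqrt 2 = 2 := Real.mul_self_sqrt (by norm_num)
  have hs2 : (0 : ℝ) ≤ Real.sqrt 2 := Real.sqrt_nonneg 2
  refine ⟨⟨2 * Real.sqrt 2 / 3, hmemb, by nlinarith⟩, ⟨hmemb, ?_⟩, ?_⟩
  · rintro r ⟨f, n, q, z, hm, -, hf0, hopa, hz, rfl⟩
    exact main_lower hm hf0 hopa hz
  · exact ⟨1, qex, ((z0r : ℝ) : ℂ), isopa_main, heval, habs⟩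
end
end

section
/- Suppose the weights of H²_ω satisfy ω_{k+n+1} < ω_{k+1}/4 for some k, n ∈ ℕ. Then M := inf{ |z| : z is a zero of some optimal polynomial approximant q_{m,f} for some nonzero f ∈ H²_ω with f(0) ≠ 0 and some m } is strictly less than 1. -/
open scoped BigOperators
open Polynomial Filter

noncomputable section

/-! ### Auxiliary lemmas -/

lemma memHw_of_support {ω : ℕ → ℝ} {N : ℕ} {u : ℕ → ℂ} (h : ∀ i, N ≤ i → u i = 0) :
    MemHw ω u := by
  apply summable_of_ne_finset_zero (s := Finset.range N)
  intro i hi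
  rw [h i (by simpa using hi)]
  simp

lemma wNormSq_eq_sum {ω : ℕ → ℝ} {N : ℕ} {u : ℕ → ℂ} (h : ∀ i, N ≤ i → u i = 0) :
    wNormSq ω u = ∑ i ∈ Finset.range N, ‖u i‖ ^ 2 * ω i := by
  apply tsum_eq_sum
  intro i hi
  rw [h i (by simpa using hi)]
  simp

lemma wInner_eq_sum {ω : ℕ → ℝ} {N : ℕ} {u : ℕ → ℂ} (v : ℕ → ℂ) (h : ∀ i, N ≤ i → u i = 0) :
    wInner ω u v = ∑ i ∈ Finset.range N, u i * (starRingEnd ℂ) (v i) * (ω i : ℂ) := by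
  apply tsum_eq_sum
  intro i hi
  rw [h i (by simpa using hi)]
  simp

lemma norm_add_sq_complex (a b : ℂ) :
    ‖a + b‖ ^ 2 = ‖a‖ ^ 2 + ‖b‖ ^ 2 + 2 * (a * (starRingEnd ℂ) b).re := by
  simp only [norm_sq_complex, Complex.add_re, Complex.add_im, Complex.mul_re,
    Complex.conj_re, Complex.conj_im]
  ring

lemma norm_ofReal_sq (r : ℝ) : ‖(r : ℂ)‖ ^ 2 = r ^ 2 := by
  rw [Complex.norm_real, Real.norm_eq_abs, sq_abs]

lemma re_mul_ofReal (z : ℂ) (r : ℝ) : (z * (r : ℂ)).re = z.re * r := by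
  simp [Complex.mul_re]

lemma polyMulSeq_deg_le_one (p : Polynomial ℂ) (hp : p.natDegree ≤ 1) (f : ℕ → ℂ) (i : ℕ) :
    polyMulSeq p f i = p.coeff 0 * f i + p.coeff 1 * (if i = 0 then 0 else f (i - 1)) := by
  unfold polyMulSeq
  have h1 : ∀ j ∈ Finset.range (i + 1), p.coeff j * f (i - j)
      = (if j = 0 then p.coeff 0 * f i else 0) + (if j = 1 then p.coeff 1 * f (i - 1) else 0) := by
    intro j _
    match j with
    | 0 => simp
    | 1 => simp
    | (m + 2) =>
      have : p.coeff (m + 2) = 0 := Polynomial.coeff_eq_zero_of_natDegree_lt (by omega)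
      simp [this]
  rw [Finset.sum_congr rfl h1, Finset.sum_add_distrib,
    Finset.sum_ite_eq' (Finset.range (i+1)) 0 (fun _ => p.coeff 0 * f i),
    Finset.sum_ite_eq' (Finset.range (i+1)) 1 (fun _ => p.coeff 1 * f (i - 1))]
  match i with
  | 0 => simp
  | (m + 1) => simp

def fRaux (ε : ℝ) (k n : ℕ) : ℕ → ℝ := fun i =>
  (if i = 0 then ε else 0) + (if i = k then 1 else 0) + (if k < i ∧ i ≤ k + n then 2 else 0)

def hsRaux (ε : ℝ) (k n : ℕ) : ℕ → ℝ := fun i =>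
  if i = 0 then 0 else fRaux ε k n (i - 1)

lemma fRaux_zero_of (ε : ℝ) (k n j : ℕ) (h0 : j ≠ 0) (hk : j ≠ k) (hm : ¬(k < j ∧ j ≤ k + n)) :
    fRaux ε k n j = 0 := by
  unfold fRaux; rw [if_neg h0, if_neg hk, if_neg hm]; ring

lemma fRaux_mid (ε : ℝ) (k n j : ℕ) (h1 : k < j) (h2 : j ≤ k + n) : fRaux ε k n j = 2 := by
  unfold fRaux; rw [if_neg (by omega), if_neg (by omega), if_pos ⟨h1, h2⟩]; ring

lemma term_ineq (ω : ℕ → ℝ) (hωpos : ∀ j, 0 < ω j) (ε : ℝ) (hε0 : 0 < ε) (hε1 : ε ≤ 1)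
    (k n : ℕ) (hn : 1 ≤ n) (i : ℕ) :
    (if i = k + 1 then (1 - ε ^ 2) * ω (k + 1) else 0)
      + (if i = k + n + 1 then -(4 * ω (k + n + 1)) else 0)
      + (if i = 1 then -(ε ^ 2 * ω 1) else 0)
    ≤ fRaux ε k n i * hsRaux ε k n i * ω i - hsRaux ε k n i ^ 2 * ω i := by
  rcases i with _ | p
  · rw [if_neg (by omega), if_neg (by omega), if_neg (by omega)]
    simp [hsRaux]
  · have hhs : hsRaux ε k n (p + 1) = fRaux ε k n p := by
      unfold hsRaux; rw [if_neg (by omega)]; simp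
    rw [hhs]
    by_cases hp0 : p = 0
    · subst hp0
      by_cases hk0 : k = 0
      · subst hk0
        have hF0 : fRaux ε 0 n 0 = ε + 1 := by
          unfold fRaux; rw [if_pos rfl, if_pos rfl, if_neg (by omega)]; ring
        have hF1 : fRaux ε 0 n 1 = 2 := fRaux_mid ε 0 n 1 (by omega) (by omega)
        rw [hF0, hF1, if_pos (by omega), if_neg (by omega), if_pos rfl]
        nlinarith [hωpos 1, sq_nonneg ε]
      · by_cases hk1 : k = 1
        · subst hk1
          have hF0 : fRaux ε 1 n 0 = ε := by
            unfold fRaux; rw [if_pos rfl, if_neg (by omega), if_neg (by omega)]; ring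
          have hF1 : fRaux ε 1 n 1 = 1 := by
            unfold fRaux; rw [if_neg (by omega), if_pos rfl, if_neg (by omega)]; ring
          rw [hF0, hF1, if_neg (by omega), if_neg (by omega), if_pos rfl]
          nlinarith [hωpos 1]
        · have hF0 : fRaux ε k n 0 = ε := by
            unfold fRaux; rw [if_pos rfl, if_neg (by omega), if_neg (by omega)]; ring
          have hF1 : fRaux ε k n 1 = 0 := fRaux_zero_of ε k n 1 (by omega) (by omega) (by omega)
          rw [hF0, hF1, if_neg (by omega), if_neg (by omega), if_pos rfl]
          nlinarith [hωpos 1]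
    · by_cases hpk : p = k
      · subst hpk
        have hFp : fRaux ε p n p = 1 := by
          unfold fRaux; rw [if_neg hp0, if_pos rfl, if_neg (by omega)]; ring
        have hFp1 : fRaux ε p n (p + 1) = 2 := fRaux_mid ε p n (p + 1) (by omega) (by omega)
        rw [hFp, hFp1, if_pos rfl, if_neg (by omega), if_neg (by omega)]
        nlinarith [hωpos (p + 1), sq_nonneg ε]
      · by_cases hmid : k < p ∧ p < k + n
        · have hFp : fRaux ε k n p = 2 := fRaux_mid ε k n p hmid.1 (by omega)
          have hFp1 : fRaux ε k n (p + 1) = 2 := fRaux_mid ε k n (p + 1) (by omega) (by omega)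
          rw [hFp, hFp1, if_neg (by omega), if_neg (by omega), if_neg (by omega)]
          ring_nf
          nlinarith [hωpos (p+1)]
        · by_cases hend : p = k + n
          · subst hend
            have hFp : fRaux ε k n (k + n) = 2 := fRaux_mid ε k n (k + n) (by omega) (by omega)
            have hFp1 : fRaux ε k n (k + n + 1) = 0 :=
              fRaux_zero_of ε k n (k + n + 1) (by omega) (by omega) (by omega)
            rw [hFp, hFp1, if_neg (by omega), if_pos (by omega), if_neg (by omega)]
            nlinarith [hωpos (k + n + 1)]
          · have hFp : fRaux ε k n p = 0 :=
              fRaux_zero_of ε k n p hp0 hpk (by omega)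
            rw [hFp, if_neg (by omega), if_neg (by omega), if_neg (by omega)]
            ring_nf
            nlinarith [hωpos (p+1)]

/-- If ω_{k+n+1} < ω_{k+1}/4 for some k, n, then some opa has a zero of modulus < 1. -/
theorem stmt_14 (ω : ℕ → ℝ) (hω0 : ω 0 = 1) (hωpos : ∀ k, 0 < ω k)
    (hratio : Tendsto (fun k => ω k / ω (k + 1)) atTop (nhds 1))
    (k n : ℕ) (hcond : ω (k + n + 1) < ω (k + 1) / 4) :
    ∃ (f : ℕ → ℂ) (m : ℕ) (q : Polynomial ℂ) (z : ℂ),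
      MemHw ω f ∧ f ≠ 0 ∧ f 0 ≠ 0 ∧ IsOPA ω f m q ∧ q.eval z = 0 ∧
      ‖z‖ < 1 := by
  have hn : 1 ≤ n := by
    by_contra h
    have hn0 : n = 0 := by omega
    subst hn0
    have := hωpos (k + 1)
    simp only [Nat.add_zero] at hcond
    linarith
  set gap : ℝ := ω (k + 1) - 4 * ω (k + n + 1) with hgapdef
  have hgap : 0 < gap := by rw [hgapdef]; linarith
  have hden : 0 < gap + ω 1 + ω (k + 1) := by
    have := hωpos 1; have := hωpos (k + 1); linarith
  set ε : ℝ := min 1 (gap / (gap + ω 1 + ω (k + 1))) with hεdef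
  have hε0 : 0 < ε := lt_min one_pos (div_pos hgap hden)
  have hε1 : ε ≤ 1 := min_le_left _ _
  have hεkey : ε ^ 2 * (ω 1 + ω (k + 1)) < gap := by
    have h2 : ε ≤ gap / (gap + ω 1 + ω (k + 1)) := min_le_right _ _
    have h3 : ε * (gap + ω 1 + ω (k + 1)) ≤ gap := by
      rw [← le_div_iff₀ hden]; exact h2
    nlinarith [hωpos 1, hωpos (k + 1), mul_pos hε0 hgap]
  set F : ℕ → ℝ := fRaux ε k n with hFdef
  set Hs : ℕ → ℝ := hsRaux ε k n with hHsdef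
  set f : ℕ → ℂ := fun i => ((F i : ℝ) : ℂ) with hfdef
  set hsC : ℕ → ℂ := fun i => ((Hs i : ℝ) : ℂ) with hhsCdef
  set N : ℕ := k + n + 2 with hNdef
  clear_value N
  have hFsupp : ∀ i, k + n + 1 ≤ i → F i = 0 := fun i hi =>
    fRaux_zero_of ε k n i (by omega) (by omega) (by omega)
  have hHs0 : Hs 0 = 0 := by rw [hHsdef]; unfold hsRaux; simp
  have hHsuccF : ∀ p : ℕ, Hs (p + 1) = F p := by
    intro p; rw [hHsdef, hFdef]; unfold hsRaux; rw [if_neg (by omega)]; simp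
  have hHsupp : ∀ i, N ≤ i → Hs i = 0 := by
    intro i hi
    rcases i with _ | p
    · exact hHs0
    · rw [hHsuccF p]; exact hFsupp p (by omega)
  have hfsupp : ∀ i, N ≤ i → f i = 0 := by
    intro i hi; rw [hfdef]; simp only []
    rw [hFsupp i (by omega)]; simp
  have hhsCsupp : ∀ i, N ≤ i → hsC i = 0 := by
    intro i hi; rw [hhsCdef]; simp only []
    rw [hHsupp i hi]; simp
  set G : ℝ := ∑ i ∈ Finset.range N, F i ^ 2 * ω i with hGdef
  set K : ℝ := ∑ i ∈ Finset.range N, Hs i ^ 2 * ω i with hKdef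
  set HR : ℝ := ∑ i ∈ Finset.range N, F i * Hs i * ω i with hHRdef
  clear_value G K HR
  -- positivity of K
  have hFk : 1 ≤ F k := by
    have h3 : ¬(k < k ∧ k ≤ k + n) := by omega
    rw [hFdef]; unfold fRaux; rw [if_pos rfl, if_neg h3]
    split_ifs <;> linarith
  have hKpos : 0 < K := by
    have hterm : Hs (k + 1) ^ 2 * ω (k + 1) ≤ K := by
      rw [hKdef]
      apply Finset.single_le_sum (f := fun i => Hs i ^ 2 * ω i)
      · intro i _; have := (hωpos i).le; positivity
      · exact Finset.mem_range.mpr (by omega)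
    rw [hHsuccF k] at hterm
    have h1 : (1:ℝ) ≤ F k ^ 2 := by nlinarith [hFk]
    have h2 := mul_le_mul_of_nonneg_right h1 (hωpos (k + 1)).le
    have h3 := hωpos (k + 1)
    linarith
  -- K < HR
  have hKH : K < HR := by
    have hsum_le : ∑ i ∈ Finset.range N,
        ((if i = k + 1 then (1 - ε ^ 2) * ω (k + 1) else 0)
          + (if i = k + n + 1 then -(4 * ω (k + n + 1)) else 0)
          + (if i = 1 then -(ε ^ 2 * ω 1) else 0))
        ≤ ∑ i ∈ Finset.range N, (F i * Hs i * ω i - Hs i ^ 2 * ω i) :=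
      Finset.sum_le_sum (fun i _ => term_ineq ω hωpos ε hε0 hε1 k n hn i)
    have hLHS : ∑ i ∈ Finset.range N,
        ((if i = k + 1 then (1 - ε ^ 2) * ω (k + 1) else 0)
          + (if i = k + n + 1 then -(4 * ω (k + n + 1)) else 0)
          + (if i = 1 then -(ε ^ 2 * ω 1) else 0))
        = (1 - ε ^ 2) * ω (k + 1) - 4 * ω (k + n + 1) - ε ^ 2 * ω 1 := by
      rw [Finset.sum_add_distrib, Finset.sum_add_distrib,
        Finset.sum_ite_eq' (Finset.range N) (k + 1) (fun _ => (1 - ε ^ 2) * ω (k + 1)),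
        Finset.sum_ite_eq' (Finset.range N) (k + n + 1) (fun _ => -(4 * ω (k + n + 1))),
        Finset.sum_ite_eq' (Finset.range N) 1 (fun _ => -(ε ^ 2 * ω 1)),
        if_pos (Finset.mem_range.mpr (by omega)), if_pos (Finset.mem_range.mpr (by omega)),
        if_pos (Finset.mem_range.mpr (by omega))]
      ring
    have hRHS : ∑ i ∈ Finset.range N, (F i * Hs i * ω i - Hs i ^ 2 * ω i) = HR - K := by
      rw [Finset.sum_sub_distrib, ← hHRdef, ← hKdef]
    rw [hLHS, hRHS] at hsum_le
    nlinarith [hεkey]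
  have hHRpos : 0 < HR := lt_trans hKpos hKH
  -- Cauchy-Schwarz: D > 0
  set D : ℝ := G * K - HR ^ 2 with hDdef
  clear_value D
  have hexp : ∑ i ∈ Finset.range N, (K * F i - HR * Hs i) ^ 2 * ω i = K * D := by
    have h1 : ∀ i ∈ Finset.range N, (K * F i - HR * Hs i) ^ 2 * ω i
        = K ^ 2 * (F i ^ 2 * ω i) - 2 * K * HR * (F i * Hs i * ω i)
          + HR ^ 2 * (Hs i ^ 2 * ω i) := by
      intro i _; ring
    rw [Finset.sum_congr rfl h1, Finset.sum_add_distrib, Finset.sum_sub_distrib,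
      ← Finset.mul_sum, ← Finset.mul_sum, ← Finset.mul_sum, ← hGdef, ← hKdef, ← hHRdef, hDdef]
    ring
  have hF0pos : 0 < F 0 := by
    have h3 : ¬(k < 0 ∧ 0 ≤ k + n) := by omega
    rw [hFdef]; unfold fRaux
    rw [if_pos rfl, if_neg h3]
    split_ifs <;> linarith
  have hKD : 0 < K * D := by
    rw [← hexp]
    have hterm : (K * F 0 - HR * Hs 0) ^ 2 * ω 0 ≤ ∑ i ∈ Finset.range N,
        (K * F i - HR * Hs i) ^ 2 * ω i := by
      apply Finset.single_le_sum (f := fun i => (K * F i - HR * Hs i) ^ 2 * ω i)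
      · intro i _; have := (hωpos i).le; positivity
      · exact Finset.mem_range.mpr (by omega)
    rw [hHs0, hω0] at hterm
    have h0 : 0 < K * F 0 := mul_pos hKpos hF0pos
    nlinarith [h0]
  have hDpos : 0 < D := by nlinarith [hKpos, hKD]
  have hDne : D ≠ 0 := ne_of_gt hDpos
  set c : ℝ := F 0 with hcdef
  set a : ℝ := c * K / D with hadef
  set b : ℝ := -(c * HR / D) with hbdef
  clear_value c a b
  have key1 : a * G + b * HR = c := by
    rw [hadef, hbdef]
    field_simp
    rw [hDdef]; ring
  have key2 : a * HR + b * K = 0 := by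
    rw [hadef, hbdef]
    field_simp
    ring
  have hbne : b ≠ 0 := by
    rw [hbdef]
    have : c * HR / D > 0 := by positivity
    linarith
  set q : Polynomial ℂ := Polynomial.C (b : ℂ) * Polynomial.X + Polynomial.C (a : ℂ) with hqdef
  clear_value q
  have hq0 : q.coeff 0 = (a : ℂ) := by
    rw [hqdef]; simp
  have hq1 : q.coeff 1 = (b : ℂ) := by
    rw [hqdef]; simp
  have hqdeg : q.natDegree ≤ 1 := by rw [hqdef]; exact Polynomial.natDegree_linear_le
  have hhsC_eq : ∀ i, hsC i = if i = 0 then 0 else f (i - 1) := by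
    intro i
    rw [hhsCdef]; simp only []
    rcases i with _ | p
    · rw [hHs0]; simp
    · rw [hHsuccF p, if_neg (by omega)]
      rw [hfdef]; simp
  set E : ℕ → ℂ := polyMulSeq q f - oneSeq with hEdef
  have hEi : ∀ i, E i = (a : ℂ) * f i + (b : ℂ) * hsC i - oneSeq i := by
    intro i
    rw [hEdef]
    show polyMulSeq q f i - oneSeq i = _
    rw [polyMulSeq_deg_le_one q hqdeg f i, hq0, hq1, ← hhsC_eq i]
  have hEsupp : ∀ i, N ≤ i → E i = 0 := by
    intro i hi
    rw [hEi i, hfsupp i hi, hhsCsupp i hi]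
    have : oneSeq i = 0 := by unfold oneSeq; rw [if_neg (by omega)]
    rw [this]; ring
  -- inner products
  have hEf : wInner ω E f = (((a * G + b * HR - c : ℝ)) : ℂ) := by
    rw [wInner_eq_sum f hEsupp]
    have hterm : ∀ i ∈ Finset.range N, E i * (starRingEnd ℂ) (f i) * ((ω i : ℝ) : ℂ)
        = (((a * F i + b * Hs i - (if i = 0 then 1 else 0)) * F i * ω i : ℝ) : ℂ) := by
      intro i _
      rw [hEi i, hfdef, hhsCdef]
      simp only [Complex.conj_ofReal]
      unfold oneSeq
      split_ifs with h
      · push_cast; ring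
      · push_cast; ring
    rw [Finset.sum_congr rfl hterm, ← Complex.ofReal_sum]
    congr 1
    have hterm2 : ∀ i ∈ Finset.range N,
        (a * F i + b * Hs i - (if i = 0 then 1 else 0)) * F i * ω i
        = a * (F i ^ 2 * ω i) + b * (F i * Hs i * ω i)
          - (if i = 0 then F 0 * ω 0 else 0) := by
      intro i _
      split_ifs with h
      · subst h; ring
      · ring
    rw [Finset.sum_congr rfl hterm2, Finset.sum_sub_distrib, Finset.sum_add_distrib,
      ← Finset.mul_sum, ← Finset.mul_sum,
      Finset.sum_ite_eq' (Finset.range N) 0 (fun _ => F 0 * ω 0),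
      if_pos (Finset.mem_range.mpr (by omega)), ← hGdef, ← hHRdef, hω0, ← hcdef]
    ring
  have hEf0 : wInner ω E f = 0 := by
    rw [hEf, key1]; simp
  have hEhs : wInner ω E hsC = (((a * HR + b * K : ℝ)) : ℂ) := by
    rw [wInner_eq_sum hsC hEsupp]
    have hterm : ∀ i ∈ Finset.range N, E i * (starRingEnd ℂ) (hsC i) * ((ω i : ℝ) : ℂ)
        = (((a * F i + b * Hs i - (if i = 0 then 1 else 0)) * Hs i * ω i : ℝ) : ℂ) := by
      intro i _
      rw [hEi i, hfdef, hhsCdef]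
      simp only [Complex.conj_ofReal]
      unfold oneSeq
      split_ifs with h
      · push_cast; ring
      · push_cast; ring
    rw [Finset.sum_congr rfl hterm, ← Complex.ofReal_sum]
    congr 1
    have hterm2 : ∀ i ∈ Finset.range N,
        (a * F i + b * Hs i - (if i = 0 then 1 else 0)) * Hs i * ω i
        = a * (F i * Hs i * ω i) + b * (Hs i ^ 2 * ω i) := by
      intro i _
      split_ifs with h
      · subst h; rw [hHs0]; ring
      · ring
    rw [Finset.sum_congr rfl hterm2, Finset.sum_add_distrib, ← Finset.mul_sum,
      ← Finset.mul_sum, ← hHRdef, ← hKdef]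
  have hEhs0 : wInner ω E hsC = 0 := by
    rw [hEhs, key2]; simp
  -- assemble
  have hf0ne : f 0 ≠ 0 := by
    rw [hfdef]; simp only []
    rw [← hcdef]
    exact_mod_cast ne_of_gt hF0pos
  refine ⟨f, 1, q, ((K / HR : ℝ) : ℂ), memHw_of_support hfsupp, ?_, hf0ne, ⟨hqdeg, ?_⟩, ?_, ?_⟩
  · intro h
    exact hf0ne (by rw [h]; rfl)
  · -- minimality
    intro p hp
    set α : ℂ := p.coeff 0 - (a : ℂ) with hαdef
    set β : ℂ := p.coeff 1 - (b : ℂ) with hβdef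
    set v : ℕ → ℂ := fun i => α * f i + β * hsC i with hvdef
    have hvsupp : ∀ i, N ≤ i → v i = 0 := by
      intro i hi
      rw [hvdef]; simp only []
      rw [hfsupp i hi, hhsCsupp i hi]; ring
    have hdecomp : ∀ i, (polyMulSeq p f - oneSeq) i = E i + v i := by
      intro i
      show polyMulSeq p f i - oneSeq i = _
      rw [polyMulSeq_deg_le_one p hp f i, ← hhsC_eq i, hEi i, hvdef]
      simp only []
      rw [hαdef, hβdef]
      ring
    have hpfsupp : ∀ i, N ≤ i → (polyMulSeq p f - oneSeq) i = 0 := by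
      intro i hi
      rw [hdecomp i, hEsupp i hi, hvsupp i hi]; ring
    rw [wNormSq_eq_sum hEsupp, wNormSq_eq_sum hpfsupp]
    have hpt : ∀ i ∈ Finset.range N, ‖(polyMulSeq p f - oneSeq) i‖ ^ 2 * ω i
        = ‖E i‖ ^ 2 * ω i + ‖v i‖ ^ 2 * ω i
          + 2 * (E i * (starRingEnd ℂ) (v i) * ((ω i : ℝ) : ℂ)).re := by
      intro i _
      rw [hdecomp i, norm_add_sq_complex, re_mul_ofReal]
      ring
    rw [Finset.sum_congr rfl hpt, Finset.sum_add_distrib, Finset.sum_add_distrib]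
    have hcross : ∑ i ∈ Finset.range N,
        2 * (E i * (starRingEnd ℂ) (v i) * ((ω i : ℝ) : ℂ)).re = 0 := by
      rw [← Finset.mul_sum, ← Complex.re_sum, ← wInner_eq_sum v hEsupp]
      have hlin : wInner ω E v
          = (starRingEnd ℂ) α * wInner ω E f + (starRingEnd ℂ) β * wInner ω E hsC := by
        rw [wInner_eq_sum v hEsupp, wInner_eq_sum f hEsupp, wInner_eq_sum hsC hEsupp,
          Finset.mul_sum, Finset.mul_sum, ← Finset.sum_add_distrib]
        apply Finset.sum_congr rfl
        intro i _
        rw [hvdef]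
        simp only [map_add, map_mul]
        ring
      rw [hlin, hEf0, hEhs0]
      simp
    rw [hcross]
    have hvnn : 0 ≤ ∑ i ∈ Finset.range N, ‖v i‖ ^ 2 * ω i := by
      apply Finset.sum_nonneg
      intro i _
      exact mul_nonneg (pow_nonneg (norm_nonneg _) 2) (hωpos i).le
    linarith
  · -- eval
    rw [hqdef]
    simp only [Polynomial.eval_add, Polynomial.eval_mul, Polynomial.eval_C, Polynomial.eval_X]
    rw [← Complex.ofReal_mul, ← Complex.ofReal_add]
    have hHRne : HR ≠ 0 := ne_of_gt hHRpos
    have hz : b * (K / HR) + a = 0 := by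
      rw [hadef, hbdef]
      field_simp
      ring
    rw [hz]; simp
  · rw [Complex.norm_real, Real.norm_eq_abs, abs_of_pos (div_pos hKpos hHRpos), div_lt_one hHRpos]
    exact hKH
end
end
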